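/- Let S ⊆ [n] with |S| ≥ 1 and 1 ≤ k ≤ |S|. Let ν be the distribution on [3]^n obtained by: sampling a uniformly random subset T ⊆ S with |T| = k, sampling a uniformly random x ∈ [3] and a uniformly random y ∈ [3]^{[n]∖T}, and forming v ∈ [3]^n with v_t = x for t ∈ T and v_i = y_i otherwise. Then the total variation distance between ν and the uniform distribution on [3]^n is at most 10k/√|S|. -/

import Mathlib

open Finset

open Finset


theorem count_pattern (n : ℕ) (A : Finset (Fin n)) (φ : Fin n → Fin 3) :
    ∑ v : Fin n → Fin 3, (if ∀ t ∈ A, v t = φ t then (1:ℝ) else 0)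
      = 3 ^ (n - A.card) := by
  have key : ∀ v : Fin n → Fin 3, (if ∀ t ∈ A, v t = φ t then (1:ℝ) else 0)
      = ∏ i, (if i ∈ A then (if v i = φ i then (1:ℝ) else 0) else 1) := by
    intro v
    rw [Finset.prod_ite_mem, Finset.univ_inter, Finset.prod_boole]; simp
  simp_rw [key]
  rw [← Fintype.prod_sum (fun i (y : Fin 3) => if i ∈ A then (if y = φ i then (1:ℝ) else 0) else 1)]
  have h2 : ∀ i : Fin n, (∑ y : Fin 3, if i ∈ A then (if y = φ i then (1:ℝ) else 0) else 1)
      = if i ∈ Aᶜ then (3:ℝ) else 1 := by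
    intro i
    by_cases hi : i ∈ A <;> simp [hi, Finset.sum_ite_eq']
  simp_rw [h2]
  rw [Finset.prod_ite_mem, Finset.univ_inter, Finset.prod_const, Finset.card_compl]
  simp


noncomputable def ind (n : ℕ) (T : Finset (Fin n)) (v : Fin n → Fin 3) : ℝ :=
  if ∃ x : Fin 3, ∀ t ∈ T, v t = x then (1:ℝ) else 0

theorem ind_split (n : ℕ) (T : Finset (Fin n)) (hT : T.Nonempty) (v : Fin n → Fin 3) :
    ind n T v = ∑ x : Fin 3, if ∀ t ∈ T, v t = x then (1:ℝ) else 0 := by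
  obtain ⟨t₀, ht₀⟩ := hT
  unfold ind
  by_cases h : ∃ x : Fin 3, ∀ t ∈ T, v t = x
  · obtain ⟨x₀, hx₀⟩ := h
    rw [if_pos ⟨x₀, hx₀⟩, Finset.sum_eq_single x₀]
    · rw [if_pos hx₀]
    · intro b _ hb
      rw [if_neg]
      intro hall
      exact hb ((hall t₀ ht₀).symm.trans (hx₀ t₀ ht₀))
    · intro h; exact absurd (Finset.mem_univ x₀) h
  · rw [if_neg h]
    symm
    apply Finset.sum_eq_zero
    intro x _
    rw [if_neg (fun hall => h ⟨x, hall⟩)]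

theorem sum_ind (n : ℕ) (T : Finset (Fin n)) (hT : T.Nonempty) :
    ∑ v : Fin n → Fin 3, ind n T v = 3 * 3 ^ (n - T.card) := by
  simp_rw [ind_split n T hT]
  rw [Finset.sum_comm]
  have : ∀ x : Fin 3, ∑ v : Fin n → Fin 3, (if ∀ t ∈ T, v t = x then (1:ℝ) else 0)
      = 3 ^ (n - T.card) := fun x => count_pattern n T (fun _ => x)
  simp_rw [this]
  rw [Finset.sum_const, Finset.card_univ]
  norm_num [nsmul_eq_mul]

theorem ind_mul_of_overlap (n : ℕ) (T T' : Finset (Fin n)) (h : (T ∩ T').Nonempty)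
    (v : Fin n → Fin 3) : ind n T v * ind n T' v = ind n (T ∪ T') v := by
  obtain ⟨t₀, ht₀⟩ := h
  rw [Finset.mem_inter] at ht₀
  unfold ind
  by_cases h1 : ∃ x : Fin 3, ∀ t ∈ T ∪ T', v t = x
  · obtain ⟨x, hx⟩ := h1
    rw [if_pos ⟨x, fun t ht => hx t (Finset.mem_union_left _ ht)⟩,
        if_pos ⟨x, fun t ht => hx t (Finset.mem_union_right _ ht)⟩,
        if_pos ⟨x, hx⟩, one_mul]
  · rw [if_neg h1]
    by_cases h2 : ∃ x : Fin 3, ∀ t ∈ T, v t = x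
    · obtain ⟨x, hx⟩ := h2
      rw [if_pos ⟨x, hx⟩, one_mul, if_neg]
      intro ⟨x', hx'⟩
      apply h1
      refine ⟨x', fun t ht => ?_⟩
      rcases Finset.mem_union.1 ht with h | h
      · rw [hx t h, ← hx t₀ ht₀.1, hx' t₀ ht₀.2]
      · exact hx' t h
    · rw [if_neg h2, zero_mul]

theorem sum_ind_mul_of_disjoint (n : ℕ) (T T' : Finset (Fin n)) (hd : Disjoint T T')
    (hT : T.Nonempty) (hT' : T'.Nonempty) :
    ∑ v : Fin n → Fin 3, ind n T v * ind n T' v = 9 * 3 ^ (n - (T ∪ T').card) := by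
  have key : ∀ v : Fin n → Fin 3, ind n T v * ind n T' v
      = ∑ x : Fin 3, ∑ x' : Fin 3,
          (if ∀ t ∈ T ∪ T', v t = (if t ∈ T then x else x') then (1:ℝ) else 0) := by
    intro v
    rw [ind_split n T hT v, ind_split n T' hT' v, Finset.sum_mul_sum]
    refine Finset.sum_congr rfl fun x _ => Finset.sum_congr rfl fun x' _ => ?_
    rw [ite_zero_mul_ite_zero, one_mul]
    congr 1
    apply propext
    constructor
    · rintro ⟨hA, hB⟩ t ht
      by_cases htT : t ∈ T
      · rw [if_pos htT]; exact hA t htT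
      · rw [if_neg htT]
        rcases Finset.mem_union.1 ht with h | h
        · exact absurd h htT
        · exact hB t h
    · intro hall
      constructor
      · intro t ht
        have := hall t (Finset.mem_union_left _ ht)
        rwa [if_pos ht] at this
      · intro t ht
        have := hall t (Finset.mem_union_right _ ht)
        rwa [if_neg (fun htT => (Finset.disjoint_left.1 hd htT) ht)] at this
  simp_rw [key]
  rw [Finset.sum_comm]
  have h1 : ∀ x : Fin 3, ∑ v : Fin n → Fin 3, ∑ x' : Fin 3,
      (if ∀ t ∈ T ∪ T', v t = (if t ∈ T then x else x') then (1:ℝ) else 0)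
      = ∑ x' : Fin 3, ∑ v : Fin n → Fin 3,
      (if ∀ t ∈ T ∪ T', v t = (if t ∈ T then x else x') then (1:ℝ) else 0) := fun _ =>
    Finset.sum_comm
  simp_rw [h1]
  have h2 : ∀ (x x' : Fin 3), ∑ v : Fin n → Fin 3,
      (if ∀ t ∈ T ∪ T', v t = (if t ∈ T then x else x') then (1:ℝ) else 0)
      = 3 ^ (n - (T ∪ T').card) := fun x x' =>
    count_pattern n (T ∪ T') (fun t => if t ∈ T then x else x')
  simp_rw [h2]
  rw [Finset.sum_const, Finset.card_univ, Finset.sum_const, Finset.card_univ]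
  rw [nsmul_eq_mul, nsmul_eq_mul]
  rw [show ((Fintype.card (Fin 3) : ℝ)) = 3 by simp]
  ring

theorem three_pow_eq (m k : ℕ) (h : m ≤ k) :
    (3:ℝ)^m = ∑ j ∈ range (k+1), (m.choose j : ℝ) * 2^j := by
  have h1 : ((2:ℝ) + 1)^m = ∑ j ∈ range (m+1), (2:ℝ)^j * 1^(m-j) * (m.choose j : ℝ) :=
    add_pow 2 1 m
  have h2 : ∑ j ∈ range (m+1), (m.choose j : ℝ) * 2^j
      = ∑ j ∈ range (k+1), (m.choose j : ℝ) * 2^j := by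
    apply Finset.sum_subset
    · intro x hx; simp at hx ⊢; omega
    · intro j _ hj2
      rw [Nat.choose_eq_zero_of_lt (by simp at hj2; omega)]; simp
  rw [show (3:ℝ) = 2+1 by norm_num, h1, ← h2]
  apply Finset.sum_congr rfl; intro j _; ring


theorem count_supersets (n : ℕ) (S : Finset (Fin n)) (k j : ℕ) (hjk : j ≤ k)
    (U : Finset (Fin n)) (hU : U ⊆ S) (hUc : U.card = j) :
    ((S.powersetCard k).filter (fun T => U ⊆ T)).card = (S.card - j).choose (k - j) := by
  have : ((S.powersetCard k).filter (fun T => U ⊆ T)).card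
      = ((S \ U).powersetCard (k - j)).card := by
    apply Finset.card_bij (fun T _ => T \ U)
    · intro T hT
      simp only [Finset.mem_filter, Finset.mem_powersetCard] at hT
      rw [Finset.mem_powersetCard]
      exact ⟨Finset.sdiff_subset_sdiff hT.1.1 Finset.Subset.rfl,
        by rw [Finset.card_sdiff_of_subset hT.2, hT.1.2, hUc]⟩
    · intro T hT T' hT' h
      simp only [Finset.mem_filter, Finset.mem_powersetCard] at hT hT'
      calc T = T \ U ∪ U := by rw [Finset.sdiff_union_of_subset hT.2]
        _ = T' \ U ∪ U := by rw [h]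
        _ = T' := by rw [Finset.sdiff_union_of_subset hT'.2]
    · intro V hV
      rw [Finset.mem_powersetCard] at hV
      refine ⟨V ∪ U, ?_, ?_⟩
      · simp only [Finset.mem_filter, Finset.mem_powersetCard]
        have hVU : Disjoint V U := Finset.disjoint_of_subset_left hV.1 Finset.sdiff_disjoint
        refine ⟨⟨Finset.union_subset (hV.1.trans (Finset.sdiff_subset)) hU, ?_⟩,
          Finset.subset_union_right⟩
        rw [Finset.card_union_of_disjoint hVU, hV.2, hUc]
        omega
      · rw [Finset.union_sdiff_right]
        exact (Finset.sdiff_eq_self_of_disjoint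
          (Finset.disjoint_of_subset_left hV.1 Finset.sdiff_disjoint)).symm ▸ rfl
  rw [this, Finset.card_powersetCard, Finset.card_sdiff_of_subset hU, hUc]


theorem double_count (n : ℕ) (S : Finset (Fin n)) (k j : ℕ) (hjk : j ≤ k) :
    ∑ T ∈ S.powersetCard k, ∑ T' ∈ S.powersetCard k, (((T ∩ T').card.choose j : ℕ) : ℝ)
      = (S.card.choose j : ℝ) * ((S.card - j).choose (k - j) : ℝ)^2 := by
  have step1 : ∀ T ∈ S.powersetCard k, ∀ T' ∈ S.powersetCard k,
      (((T ∩ T').card.choose j : ℕ) : ℝ)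
        = ∑ U ∈ S.powersetCard j, (if U ⊆ T then (1:ℝ) else 0) * (if U ⊆ T' then (1:ℝ) else 0) := by
    intro T hT T' hT'
    rw [Finset.mem_powersetCard] at hT hT'
    have hset : (T ∩ T').powersetCard j = (S.powersetCard j).filter (fun U => U ⊆ T ∧ U ⊆ T') := by
      ext U
      simp only [Finset.mem_powersetCard, Finset.mem_filter, Finset.subset_inter_iff]
      constructor
      · rintro ⟨⟨h1, h2⟩, h3⟩; exact ⟨⟨h1.trans hT.1, h3⟩, h1, h2⟩
      · rintro ⟨⟨_, h3⟩, h1, h2⟩; exact ⟨⟨h1, h2⟩, h3⟩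
    rw [← Finset.card_powersetCard, hset]
    rw [Finset.card_filter]
    push_cast
    apply Finset.sum_congr rfl
    intro U _
    by_cases h1 : U ⊆ T <;> by_cases h2 : U ⊆ T' <;> simp [h1, h2]
  rw [Finset.sum_congr rfl (fun T hT => Finset.sum_congr rfl (step1 T hT))]
  have swap1 : ∀ T : Finset (Fin n), ∑ T' ∈ S.powersetCard k, ∑ U ∈ S.powersetCard j,
      (if U ⊆ T then (1:ℝ) else 0) * (if U ⊆ T' then (1:ℝ) else 0)
      = ∑ U ∈ S.powersetCard j, ∑ T' ∈ S.powersetCard k,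
      (if U ⊆ T then (1:ℝ) else 0) * (if U ⊆ T' then (1:ℝ) else 0) := fun T => Finset.sum_comm
  rw [Finset.sum_congr rfl (fun T _ => swap1 T), Finset.sum_comm]
  have inner : ∀ U ∈ S.powersetCard j, ∑ T ∈ S.powersetCard k, ∑ T' ∈ S.powersetCard k,
      (if U ⊆ T then (1:ℝ) else 0) * (if U ⊆ T' then (1:ℝ) else 0)
      = ((S.card - j).choose (k - j) : ℝ)^2 := by
    intro U hU
    rw [Finset.mem_powersetCard] at hU
    rw [← Finset.sum_mul_sum]
    have hc : ∑ T ∈ S.powersetCard k, (if U ⊆ T then (1:ℝ) else 0)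
        = ((S.card - j).choose (k - j) : ℝ) := by
      rw [Finset.sum_boole, ← count_supersets n S k j hjk U hU.1 hU.2]
    rw [hc]
    ring
  rw [Finset.sum_congr rfl inner, Finset.sum_const, Finset.card_powersetCard, nsmul_eq_mul]


theorem choose_ratio (s k : ℕ) (hk : k ≤ s) :
    ∀ j, j ≤ k → (s - j).choose (k - j) * (s - k)^j ≤ s.choose k * k^j := by
  intro j
  induction j with
  | zero => simp
  | succ j ih =>
    intro hj1
    have hj : j ≤ k := le_of_lt (Nat.lt_of_succ_le hj1)
    have ihj := ih hj
    have hjs : j < s := lt_of_lt_of_le (Nat.lt_of_succ_le hj1) hk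
    have key2 : (s - j) * ((s - (j+1)).choose (k - (j+1))) = (s - j).choose (k - j) * (k - j) := by
      have h1 : s - j = (s - j - 1) + 1 := by omega
      have h2 : k - j = (k - j - 1) + 1 := by omega
      have e1 : s - (j+1) = s - j - 1 := by omega
      have e2 : k - (j+1) = k - j - 1 := by omega
      calc (s - j) * ((s - (j+1)).choose (k - (j+1)))
          = ((s - j - 1) + 1) * ((s - j - 1).choose (k - j - 1)) := by rw [e1, e2, ← h1]
        _ = ((s - j - 1) + 1).choose ((k - j - 1) + 1) * ((k - j - 1) + 1) :=
            Nat.add_one_mul_choose_eq _ _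
        _ = (s - j).choose (k - j) * (k - j) := by rw [← h1, ← h2]
    -- main chain
    have step : (s - (j+1)).choose (k - (j+1)) * (s - k)^(j+1) * (s - j)
        ≤ s.choose k * k^(j+1) * (s - j) := by
      calc (s - (j+1)).choose (k - (j+1)) * (s - k)^(j+1) * (s - j)
          = ((s - j) * (s - (j+1)).choose (k - (j+1))) * ((s-k)^j * (s-k)) := by ring
        _ = ((s - j).choose (k - j) * (k - j)) * ((s-k)^j * (s-k)) := by rw [key2]
        _ = ((s - j).choose (k - j) * (s-k)^j) * ((k - j) * (s-k)) := by ring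
        _ ≤ (s.choose k * k^j) * ((k - j) * (s-k)) := Nat.mul_le_mul_right _ ihj
        _ ≤ (s.choose k * k^j) * (k * (s - j)) := by
            apply Nat.mul_le_mul_left
            have h1 : k - j + j = k := Nat.sub_add_cancel hj
            have h2 : s - k + k = s := Nat.sub_add_cancel hk
            have h3 : s - j + j = s := Nat.sub_add_cancel (le_of_lt hjs)
            nlinarith [h1, h2, h3, Nat.zero_le (j * (k - j)), Nat.zero_le (j * (s - k))]
        _ = s.choose k * k^(j+1) * (s - j) := by ring
    exact Nat.le_of_mul_le_mul_right step (by omega)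


theorem one_add_pow_le (x : ℝ) (hx : 0 ≤ x) :
    ∀ k : ℕ, 2 * k * x ≤ 1 → (1 + x)^k ≤ 1 + 2 * k * x := by
  intro k
  induction k with
  | zero => simp
  | succ k ih =>
    intro h
    have hk : 2 * (k:ℝ) * x ≤ 1 := by
      push_cast at h ⊢
      nlinarith
    have ihk := ih hk
    push_cast
    have h1x : (0:ℝ) ≤ 1 + x := by linarith
    calc (1 + x)^(k+1) = (1+x)^k * (1+x) := by ring
      _ ≤ (1 + 2*k*x) * (1+x) := by
          apply mul_le_mul_of_nonneg_right ihk h1x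
      _ = 1 + (2*k+1)*x + 2*k*x^2 := by ring
      _ ≤ 1 + 2*((k:ℝ)+1)*x := by
          nlinarith [mul_le_mul_of_nonneg_right hk hx, sq_nonneg x]


theorem sum_pow_inter_le (n k : ℕ) (S : Finset (Fin n)) (hks : k < S.card) :
    ∑ T ∈ S.powersetCard k, ∑ T' ∈ S.powersetCard k, (3:ℝ)^((T ∩ T').card)
      ≤ (S.card.choose k : ℝ)^2 * (1 + 2*k/((S.card:ℝ) - k))^k := by
  set s := S.card with hs
  have hk : k ≤ s := le_of_lt hks
  have hsk : (0:ℝ) < (s:ℝ) - k := by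
    have : (k:ℝ) < s := by exact_mod_cast hks
    linarith
  have step1 : ∑ T ∈ S.powersetCard k, ∑ T' ∈ S.powersetCard k, (3:ℝ)^((T ∩ T').card)
      = ∑ j ∈ range (k+1), (2:ℝ)^j *
          ∑ T ∈ S.powersetCard k, ∑ T' ∈ S.powersetCard k, (((T ∩ T').card.choose j : ℕ) : ℝ) := by
    have hterm : ∀ T ∈ S.powersetCard k, ∀ T' ∈ S.powersetCard k,
        (3:ℝ)^((T ∩ T').card) = ∑ j ∈ range (k+1), (((T ∩ T').card.choose j : ℕ):ℝ) * 2^j := by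
      intro T hT T' _
      apply three_pow_eq
      rw [Finset.mem_powersetCard] at hT
      exact le_trans (Finset.card_le_card Finset.inter_subset_left) (le_of_eq hT.2)
    rw [Finset.sum_congr rfl (fun T hT => Finset.sum_congr rfl (hterm T hT))]
    rw [Finset.sum_congr rfl (fun T _ => Finset.sum_comm), Finset.sum_comm]
    apply Finset.sum_congr rfl
    intro j _
    rw [Finset.mul_sum]
    apply Finset.sum_congr rfl
    intro T _
    rw [Finset.mul_sum]
    apply Finset.sum_congr rfl
    intro T' _
    ring
  rw [step1]
  have step2 : ∀ j ∈ range (k+1), (2:ℝ)^j *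
        (∑ T ∈ S.powersetCard k, ∑ T' ∈ S.powersetCard k, (((T ∩ T').card.choose j : ℕ) : ℝ))
      ≤ (s.choose k : ℝ)^2 * ((k.choose j : ℝ) * (2*k/((s:ℝ) - k))^j) := by
    intro j hj
    rw [Finset.mem_range] at hj
    have hjk : j ≤ k := by omega
    rw [double_count n S k j hjk]
    -- ℕ inequality
    have hnat : s.choose j * (s - j).choose (k - j) * (s - j).choose (k - j) * (s-k)^j
        ≤ s.choose k * k.choose j * (s.choose k * k^j) := by
      have h1 : s.choose k * k.choose j = s.choose j * (s - j).choose (k - j) :=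
        Nat.choose_mul (n := s) hjk
      calc s.choose j * (s - j).choose (k - j) * (s - j).choose (k - j) * (s-k)^j
          = (s.choose k * k.choose j) * ((s - j).choose (k - j) * (s-k)^j) := by rw [h1]; ring
        _ ≤ (s.choose k * k.choose j) * (s.choose k * k^j) :=
            Nat.mul_le_mul_left _ (choose_ratio s k hk j hjk)
        _ = s.choose k * k.choose j * (s.choose k * k^j) := rfl
    have hreal : (s.choose j : ℝ) * ((s - j).choose (k - j) : ℝ)^2 * ((s:ℝ)-k)^j
        ≤ (s.choose k : ℝ) * (k.choose j : ℝ) * ((s.choose k : ℝ) * (k:ℝ)^j) := by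
      have hcast : ((s:ℝ) - k) = ((s - k : ℕ) : ℝ) := by
        rw [Nat.cast_sub hk]
      have h2 : ((s.choose j * (s - j).choose (k - j) * (s - j).choose (k - j) * (s-k)^j : ℕ) : ℝ)
          ≤ ((s.choose k * k.choose j * (s.choose k * k^j) : ℕ) : ℝ) := Nat.cast_le.mpr hnat
      push_cast at h2
      rw [hcast]
      nlinarith [h2]
    calc (2:ℝ)^j * ((s.choose j : ℝ) * ((s - j).choose (k - j) : ℝ)^2)
        ≤ (2:ℝ)^j * ((s.choose k : ℝ) * (k.choose j : ℝ) * ((s.choose k : ℝ) * (k:ℝ)^j) / ((s:ℝ)-k)^j) := by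
          apply mul_le_mul_of_nonneg_left _ (by positivity)
          rw [le_div_iff₀ (by positivity)]
          exact hreal
      _ = (s.choose k : ℝ)^2 * ((k.choose j : ℝ) * (2*k/((s:ℝ) - k))^j) := by
          rw [div_pow, mul_pow]
          field_simp
  calc ∑ j ∈ range (k+1), (2:ℝ)^j *
        (∑ T ∈ S.powersetCard k, ∑ T' ∈ S.powersetCard k, (((T ∩ T').card.choose j : ℕ) : ℝ))
      ≤ ∑ j ∈ range (k+1), (s.choose k : ℝ)^2 * ((k.choose j : ℝ) * (2*k/((s:ℝ) - k))^j) :=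
        Finset.sum_le_sum step2
    _ = (s.choose k : ℝ)^2 * ∑ j ∈ range (k+1), (2*k/((s:ℝ) - k))^j * 1^(k-j) * (k.choose j : ℝ) := by
        rw [Finset.mul_sum]; apply Finset.sum_congr rfl; intro j _; ring
    _ = (s.choose k : ℝ)^2 * (2*k/((s:ℝ) - k) + 1)^k := by rw [← add_pow]
    _ = (s.choose k : ℝ)^2 * (1 + 2*k/((s:ℝ) - k))^k := by ring


theorem pair_bound (n k : ℕ) (hk1 : 1 ≤ k) (T T' : Finset (Fin n))
    (hT : T.card = k) (hT' : T'.card = k) :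
    (3:ℝ)^n * (((3:ℝ)^(n-k+1))⁻¹)^2 * (∑ v : Fin n → Fin 3, ind n T v * ind n T' v)
      ≤ 1 + (1/2) * ((3:ℝ)^((T ∩ T').card) - 1) := by
  have hTne : T.Nonempty := Finset.card_pos.mp (by omega)
  have hT'ne : T'.Nonempty := Finset.card_pos.mp (by omega)
  have hkn : k ≤ n := by
    have := Finset.card_le_univ T
    simp only [Finset.card_univ, Fintype.card_fin] at this
    omega
  have hm : (T ∪ T').card ≤ n := by
    have := Finset.card_le_univ (T ∪ T')
    simp only [Finset.card_univ, Fintype.card_fin] at this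
    omega
  have hmj : (T ∪ T').card + (T ∩ T').card = 2 * k := by
    have := Finset.card_union_add_card_inter T T'
    omega
  set m := (T ∪ T').card
  set j := (T ∩ T').card
  have h3 : (0:ℝ) < 3 := by norm_num
  by_cases hd : (T ∩ T').Nonempty
  · have hj1 : 1 ≤ j := Finset.card_pos.mpr hd
    have hsum : ∑ v : Fin n → Fin 3, ind n T v * ind n T' v = 3 * 3 ^ (n - m) := by
      rw [Finset.sum_congr rfl (fun v _ => ind_mul_of_overlap n T T' hd v)]
      exact sum_ind n (T ∪ T') (hTne.mono Finset.subset_union_left)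
    rw [hsum]
    have heq : (3:ℝ)^n * (((3:ℝ)^(n-k+1))⁻¹)^2 * (3 * 3 ^ (n - m)) = 3^j / 3 := by
      have hne : ((3:ℝ)^((n-k+1)*2)) ≠ 0 := by positivity
      rw [inv_pow, ← pow_mul, mul_comm ((3:ℝ)^n) _, mul_assoc, inv_mul_eq_div,
        div_eq_div_iff hne (by norm_num : (3:ℝ) ≠ 0)]
      have e1 : (3:ℝ)^n * (3*3^(n-m)) * 3 = 3^(n + (n-m) + 2) := by
        rw [pow_add, pow_add]; ring
      have e2 : (3:ℝ)^j * 3^((n-k+1)*2) = 3^(j + (n-k+1)*2) := by rw [pow_add]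
      rw [e1, e2]
      congr 1
      omega
    rw [heq]
    have h1 : (1:ℝ) ≤ 3^j := one_le_pow₀ (by norm_num)
    linarith
  · have hdisj : Disjoint T T' := by
      rwa [Finset.disjoint_iff_inter_eq_empty, ← Finset.not_nonempty_iff_eq_empty]
    have hj0 : j = 0 := by
      simp [j, Finset.disjoint_iff_inter_eq_empty.mp hdisj]
    have hsum := sum_ind_mul_of_disjoint n T T' hdisj hTne hT'ne
    rw [hsum]
    have heq : (3:ℝ)^n * (((3:ℝ)^(n-k+1))⁻¹)^2 * (9 * 3 ^ (n - m)) = 1 := by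
      have hne : ((3:ℝ)^((n-k+1)*2)) ≠ 0 := by positivity
      rw [inv_pow, ← pow_mul, mul_comm ((3:ℝ)^n) _, mul_assoc, inv_mul_eq_div,
        div_eq_one_iff_eq hne]
      have e1 : (3:ℝ)^n * (9*3^(n-m)) = 3^(n + (n-m) + 2) := by
        rw [pow_add, pow_add]; ring
      rw [e1]
      congr 1
      omega
    rw [heq, hj0]
    norm_num


set_option maxHeartbeats 1000000

/-- the distribution obtained by choosing a uniformly random k-subset T of S,
a uniform x ∈ [3] and uniform values on the other coordinates, and setting all coordinates
of T equal to x, is within total variation distance 10k/√|S| of the uniform distribution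
on [3]^n. -/
theorem stmt1 (n k : ℕ) (S : Finset (Fin n)) (hS : 1 ≤ S.card)
    (hk1 : 1 ≤ k) (hk : k ≤ S.card) :
    (1 / 2) * ∑ v : Fin n → Fin 3,
      |((S.card.choose k : ℝ))⁻¹ *
          (∑ T ∈ S.powersetCard k,
            (if ∃ x : Fin 3, ∀ t ∈ T, v t = x then ((3 : ℝ) ^ (n - k + 1))⁻¹ else 0))
        - ((3 : ℝ) ^ n)⁻¹|
      ≤ 10 * k / Real.sqrt S.card := by
  classical
  have hsn : S.card ≤ n := by
    have := Finset.card_le_univ S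
    simp only [Finset.card_univ, Fintype.card_fin] at this
    omega
  set s : ℕ := S.card with hs
  set c : ℝ := (s.choose k : ℝ) with hcdef
  set w : ℝ := ((3:ℝ)^(n-k+1))⁻¹ with hwdef
  set u : ℝ := ((3:ℝ)^n)⁻¹ with hudef
  set P : Finset (Finset (Fin n)) := S.powersetCard k with hPdef
  set G : (Fin n → Fin 3) → ℝ := fun v => c⁻¹ * w * ∑ T ∈ P, ind n T v with hGdef
  have hc : (0:ℝ) < c := by
    rw [hcdef]; exact_mod_cast Nat.choose_pos hk
  have hw : (0:ℝ) < w := by rw [hwdef]; positivity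
  have hu : (0:ℝ) < u := by rw [hudef]; positivity
  have hspos : (0:ℝ) < (s:ℝ) := by exact_mod_cast hS
  have hsqrt : 0 < Real.sqrt s := Real.sqrt_pos.mpr hspos
  have hcardP : (P.card : ℝ) = c := by
    rw [hPdef, Finset.card_powersetCard, hcdef]
  have hTmem : ∀ T ∈ P, T.card = k ∧ T.Nonempty := by
    intro T hT
    rw [hPdef, Finset.mem_powersetCard] at hT
    exact ⟨hT.2, Finset.card_pos.mp (by omega)⟩
  -- rewrite the statement sum in terms of G
  have hrw : ∀ v : Fin n → Fin 3,
      ((S.card.choose k : ℝ))⁻¹ *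
          (∑ T ∈ S.powersetCard k,
            (if ∃ x : Fin 3, ∀ t ∈ T, v t = x then ((3 : ℝ) ^ (n - k + 1))⁻¹ else 0))
      = G v := by
    intro v
    have hstep : ∑ T ∈ S.powersetCard k,
        (if ∃ x : Fin 3, ∀ t ∈ T, v t = x then ((3 : ℝ) ^ (n - k + 1))⁻¹ else 0)
        = w * ∑ T ∈ P, ind n T v := by
      rw [Finset.mul_sum]
      apply Finset.sum_congr rfl
      intro T _
      rw [ind]
      split_ifs <;> simp [hwdef]
    rw [hstep, hGdef, ← mul_assoc]
  rw [show ∑ v : Fin n → Fin 3,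
      |((S.card.choose k : ℝ))⁻¹ *
          (∑ T ∈ S.powersetCard k,
            (if ∃ x : Fin 3, ∀ t ∈ T, v t = x then ((3 : ℝ) ^ (n - k + 1))⁻¹ else 0))
        - ((3 : ℝ) ^ n)⁻¹|
      = ∑ v : Fin n → Fin 3, |G v - u| from
    Finset.sum_congr rfl fun v _ => by rw [hrw v]]
  -- basic facts
  have hw1 : w * (3 * 3^(n-k)) = 1 := by
    rw [hwdef, show (3:ℝ) * 3^(n-k) = 3^(n-k+1) by rw [pow_succ]; ring]
    exact inv_mul_cancel₀ (by positivity)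
  have hGnonneg : ∀ v, 0 ≤ G v := by
    intro v
    rw [hGdef]
    apply mul_nonneg (by positivity)
    apply Finset.sum_nonneg
    intro T _
    rw [ind]
    split_ifs <;> norm_num
  have FA : ∑ v : Fin n → Fin 3, G v = 1 := by
    rw [hGdef]
    simp only
    rw [← Finset.mul_sum, Finset.sum_comm]
    rw [Finset.sum_congr rfl (fun T hT => by
      rw [sum_ind n T (hTmem T hT).2, (hTmem T hT).1])]
    rw [Finset.sum_const, nsmul_eq_mul, hcardP]
    calc c⁻¹ * w * (c * (3 * 3^(n-k))) = (c⁻¹ * c) * (w * (3 * 3^(n-k))) := by ring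
      _ = 1 := by rw [inv_mul_cancel₀ (ne_of_gt hc), hw1]; norm_num
  have hcard3 : ((Fintype.card (Fin n → Fin 3)) : ℝ) = 3^n := by
    rw [Fintype.card_fun, Fintype.card_fin, Fintype.card_fin]
    push_cast
    ring
  have hsum1 : ∑ _v : Fin n → Fin 3, (1:ℝ) = 3^n := by
    rw [Finset.sum_const, Finset.card_univ, nsmul_eq_mul, mul_one, hcard3]
  have h3nu : (3:ℝ)^n * u = 1 := by
    rw [hudef]; exact mul_inv_cancel₀ (by positivity)
  -- case split
  by_cases hbr : s ≤ 100 * (k * k)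
  · -- trivial bound
    have htriv : ∀ v, |G v - u| ≤ G v + u := fun v =>
      (abs_sub _ _).trans (by rw [abs_of_nonneg (hGnonneg v), abs_of_nonneg (le_of_lt hu)])
    have hsum : ∑ v : Fin n → Fin 3, |G v - u| ≤ 2 := by
      calc ∑ v : Fin n → Fin 3, |G v - u| ≤ ∑ v : Fin n → Fin 3, (G v + u) :=
            Finset.sum_le_sum (fun v _ => htriv v)
        _ = (∑ v : Fin n → Fin 3, G v) + (3:ℝ)^n * u := by
            rw [Finset.sum_add_distrib, Finset.sum_const, Finset.card_univ, nsmul_eq_mul, hcard3]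
        _ = 2 := by rw [FA, h3nu]; norm_num
    have hrhs : (1:ℝ) ≤ 10 * k / Real.sqrt s := by
      rw [le_div_iff₀ hsqrt, one_mul]
      have : Real.sqrt s ≤ 10 * k := by
        rw [show (10:ℝ) * k = Real.sqrt ((10*k)^2) from (Real.sqrt_sq (by positivity)).symm]
        apply Real.sqrt_le_sqrt
        have : (s:ℝ) ≤ 100 * (k*k) := by exact_mod_cast hbr
        nlinarith
      linarith
    linarith
  · -- main branch
    push_neg at hbr
    have hk2 : k * k < s := by nlinarith
    have hks : k < s := by nlinarith [Nat.le_mul_of_pos_left k (by omega : 0 < k)]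
    have hskpos : (0:ℝ) < (s:ℝ) - k := by
      have : (k:ℝ) < s := by exact_mod_cast hks
      linarith
    set x : ℝ := 2*k/((s:ℝ) - k) with hxdef
    have hx0 : (0:ℝ) ≤ x := by rw [hxdef]; positivity
    have hnat4 : 4*(k*k) + k ≤ s := by nlinarith
    have hx1 : 2 * k * x ≤ 1 := by
      rw [hxdef, show (2:ℝ)*k*(2*k/((s:ℝ)-k)) = (4*(k:ℝ)*k)/((s:ℝ)-k) by ring,
        div_le_one hskpos]
      have h4 : ((4*(k*k) + k : ℕ) : ℝ) ≤ (s:ℝ) := by exact_mod_cast hnat4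
      push_cast at h4
      nlinarith
    -- second moment
    have key : ∀ v, (G v)^2 = (c⁻¹)^2 * ∑ T ∈ P, ∑ T' ∈ P, (w^2 * (ind n T v * ind n T' v)) := by
      intro v
      calc (G v)^2
          = (c⁻¹)^2 * (w^2 * ((∑ T ∈ P, ind n T v) * (∑ T' ∈ P, ind n T' v))) := by
            rw [hGdef]; ring
        _ = (c⁻¹)^2 * ∑ T ∈ P, ∑ T' ∈ P, (w^2 * (ind n T v * ind n T' v)) := by
            rw [Finset.sum_mul_sum, Finset.mul_sum]
            congr 1
            apply Finset.sum_congr rfl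
            intro T _
            rw [Finset.mul_sum]
    have FB1 : (3:ℝ)^n * ∑ v : Fin n → Fin 3, (G v)^2
        = (c⁻¹)^2 * ∑ T ∈ P, ∑ T' ∈ P,
            ((3:ℝ)^n * w^2 * ∑ v : Fin n → Fin 3, ind n T v * ind n T' v) := by
      rw [Finset.sum_congr rfl (fun v _ => key v), ← Finset.mul_sum, Finset.sum_comm]
      have swap : ∀ T : Finset (Fin n),
          ∑ v : Fin n → Fin 3, ∑ T' ∈ P, w^2 * (ind n T v * ind n T' v)
          = ∑ T' ∈ P, ∑ v : Fin n → Fin 3, w^2 * (ind n T v * ind n T' v) := fun T =>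
        Finset.sum_comm
      rw [Finset.sum_congr rfl (fun T _ => swap T)]
      rw [← mul_assoc, mul_comm ((3:ℝ)^n) ((c⁻¹)^2), mul_assoc]
      congr 1
      rw [Finset.mul_sum]
      apply Finset.sum_congr rfl
      intro T _
      rw [Finset.mul_sum]
      apply Finset.sum_congr rfl
      intro T' _
      rw [← Finset.mul_sum]
      ring
    have FB2 : (3:ℝ)^n * ∑ v : Fin n → Fin 3, (G v)^2 ≤ 1 + k * x := by
      rw [FB1]
      have hbound : ∑ T ∈ P, ∑ T' ∈ P,
          ((3:ℝ)^n * w^2 * ∑ v : Fin n → Fin 3, ind n T v * ind n T' v)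
          ≤ ∑ T ∈ P, ∑ T' ∈ P, (1 + (1/2) * ((3:ℝ)^((T ∩ T').card) - 1)) := by
        apply Finset.sum_le_sum
        intro T hT
        apply Finset.sum_le_sum
        intro T' hT'
        rw [hwdef]
        exact pair_bound n k hk1 T T' (hTmem T hT).1 (hTmem T' hT').1
      have e1 : ∑ _T ∈ P, ∑ _T' ∈ P, (1:ℝ) = c^2 := by
        simp only [Finset.sum_const, nsmul_eq_mul, mul_one, hcardP]
        ring
      have hsplit : ∑ T ∈ P, ∑ T' ∈ P, (1 + (1/2) * ((3:ℝ)^((T ∩ T').card) - 1))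
          = c^2 + (1/2) * ((∑ T ∈ P, ∑ T' ∈ P, (3:ℝ)^((T ∩ T').card)) - c^2) := by
        rw [Finset.sum_congr rfl (fun T (_ : T ∈ P) => Finset.sum_add_distrib),
          Finset.sum_add_distrib, e1]
        congr 1
        rw [Finset.sum_congr rfl
          (fun T (_ : T ∈ P) => (Finset.mul_sum P _ (1/2 : ℝ)).symm), ← Finset.mul_sum]
        congr 1
        rw [Finset.sum_congr rfl (fun T (_ : T ∈ P) => Finset.sum_sub_distrib _ _),
          Finset.sum_sub_distrib, e1]
      have h2 : ∑ T ∈ P, ∑ T' ∈ P, (3:ℝ)^((T ∩ T').card) ≤ c^2 * (1 + 2*k*x) := by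
        refine le_trans (sum_pow_inter_le n k S hks) ?_
        apply mul_le_mul_of_nonneg_left _ (by positivity)
        exact one_add_pow_le x hx0 k hx1
      have h3 : (c⁻¹)^2 * (c^2*(1+(k:ℝ)*x)) = 1 + k*x := by
        field_simp
      calc (c⁻¹)^2 * ∑ T ∈ P, ∑ T' ∈ P,
            ((3:ℝ)^n * w^2 * ∑ v : Fin n → Fin 3, ind n T v * ind n T' v)
          ≤ (c⁻¹)^2 * (c^2*(1+(k:ℝ)*x)) := by
            apply mul_le_mul_of_nonneg_left _ (by positivity)
            have := hbound.trans (le_of_eq hsplit)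
            linarith
        _ = 1 + k*x := h3
    -- variance identity
    have FC : (3:ℝ)^n * ∑ v : Fin n → Fin 3, (G v - u)^2 ≤ k * x := by
      have hexp : ∑ v : Fin n → Fin 3, (G v - u)^2
          = (∑ v : Fin n → Fin 3, (G v)^2) - (2*u) * (∑ v : Fin n → Fin 3, G v)
            + (3:ℝ)^n * u^2 := by
        calc ∑ v : Fin n → Fin 3, (G v - u)^2
            = ∑ v : Fin n → Fin 3, ((G v)^2 - (2*u) * G v + u^2) := by
              apply Finset.sum_congr rfl; intros; ring
          _ = (∑ v : Fin n → Fin 3, (G v)^2) - (2*u) * (∑ v : Fin n → Fin 3, G v)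
              + (3:ℝ)^n * u^2 := by
              rw [Finset.sum_add_distrib, Finset.sum_sub_distrib, ← Finset.mul_sum,
                Finset.sum_const, Finset.card_univ, nsmul_eq_mul, hcard3]
      rw [hexp, FA]
      have hu2 : (3:ℝ)^n * ((3:ℝ)^n * u^2) = 1 := by
        rw [show (3:ℝ)^n * ((3:ℝ)^n * u^2) = ((3:ℝ)^n*u) * ((3:ℝ)^n*u) by ring, h3nu]
        norm_num
      have : (3:ℝ)^n * ((∑ v : Fin n → Fin 3, (G v)^2) - 2*u*1 + (3:ℝ)^n * u^2)
          = (3:ℝ)^n * (∑ v : Fin n → Fin 3, (G v)^2) - 2*((3:ℝ)^n*u)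
            + (3:ℝ)^n * ((3:ℝ)^n * u^2) := by ring
      rw [this, h3nu, hu2]
      linarith [FB2]
    -- Cauchy-Schwarz
    set A : ℝ := ∑ v : Fin n → Fin 3, |G v - u| with hAdef
    have hA0 : 0 ≤ A := Finset.sum_nonneg (fun v _ => abs_nonneg _)
    have FD : A^2 ≤ (3:ℝ)^n * ∑ v : Fin n → Fin 3, (G v - u)^2 := by
      have hcs := Finset.sum_mul_sq_le_sq_mul_sq Finset.univ
        (fun v : Fin n → Fin 3 => |G v - u|) (fun _ => (1:ℝ))
      simp only [mul_one, one_pow, sq_abs] at hcs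
      rw [hsum1] at hcs
      calc A^2 ≤ (∑ v : Fin n → Fin 3, (G v - u)^2) * (3:ℝ)^n := hcs
        _ = (3:ℝ)^n * ∑ v : Fin n → Fin 3, (G v - u)^2 := by ring
    have hkx : (k:ℝ) * x ≤ (2*k/Real.sqrt s)^2 := by
      have hsq : (Real.sqrt s)^2 = (s:ℝ) := Real.sq_sqrt (le_of_lt hspos)
      rw [div_pow, hsq, hxdef,
        show (k:ℝ) * (2*(k:ℝ)/((s:ℝ)-(k:ℝ))) = (2*(k:ℝ)*(k:ℝ))/((s:ℝ)-(k:ℝ)) by ring,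
        div_le_div_iff₀ hskpos hspos]
      have h2ks : 2*(k:ℝ) ≤ (s:ℝ) := by
        have : ((2*k : ℕ):ℝ) ≤ ((s:ℕ):ℝ) := by
          exact_mod_cast (by nlinarith : 2*k ≤ s)
        push_cast at this
        linarith
      nlinarith [hspos, hskpos]
    have hAle : A ≤ 2*k/Real.sqrt s := by
      have h1 : A^2 ≤ (2*k/Real.sqrt s)^2 := le_trans FD (le_trans FC hkx)
      have h2 : (0:ℝ) ≤ 2*k/Real.sqrt s := by positivity
      nlinarith
    calc (1/2 : ℝ)*A ≤ (1/2)*(2*k/Real.sqrt s) := by linarith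
      _ = k/Real.sqrt s := by ring
      _ ≤ 10*k/Real.sqrt s := by
          gcongr
          have : (0:ℝ) ≤ (k:ℝ) := Nat.cast_nonneg k
          linarith
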